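/- Let x_0 < x_1 < ⋯ < x_N be a partition of [x_0,x_N], let a_n = (x_n − x_{n−1})/(x_N − x_0), b_n = (x_N x_{n−1} − x_0 x_n)/(x_N − x_0), L_n(x) = a_n x + b_n. Let α_1, …, α_N ∈ (−1,1), let q_n : [x_0,x_N] → ℝ be continuous, and let y_0, …, y_N ∈ ℝ satisfy the join-up conditions α_n y_0 + q_n(x_0) = y_{n−1} and α_n y_N + q_n(x_N) = y_n for each 1 ≤ n ≤ N. Then there exists a unique continuous function φ : [x_0,x_N] → ℝ such that φ(L_n(x)) = α_n φ(x) + q_n(x) for all x ∈ [x_0,x_N] and all 1 ≤ n ≤ N; moreover this φ satisfies φ(x_n) = y_n for 0 ≤ n ≤ N. -/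

import Mathlib

open Set

noncomputable def fifLinv (x : ℕ → ℝ) (N n : ℕ) (z : ℝ) : ℝ :=
  (z * (x N - x 0) - (x N * x (n - 1) - x 0 * x n)) / (x n - x (n - 1))

noncomputable def fifPiece (x : ℕ → ℝ) (N : ℕ) (α : ℕ → ℝ) (q : ℕ → ℝ → ℝ)
    (f : ℝ → ℝ) (n : ℕ) (z : ℝ) : ℝ :=
  α n * f (fifLinv x N n z) + q n (fifLinv x N n z)

noncomputable def fifT (x : ℕ → ℝ) (N : ℕ) (α : ℕ → ℝ) (q : ℕ → ℝ → ℝ)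
    (f : ℝ → ℝ) : ℕ → ℝ → ℝ
  | 0 => fifPiece x N α q f 1
  | (m + 1) => fun z => if z ≤ x m then fifT x N α q f m z else fifPiece x N α q f (m + 1) z

lemma fif_pasting {f : ℝ → ℝ} {s t : Set ℝ} (hs : IsClosed s) (ht : IsClosed t)
    (hfs : ContinuousOn f s) (hft : ContinuousOn f t) : ContinuousOn f (s ∪ t) := by
  intro z hz
  have hws : ContinuousWithinAt f s z := by
    by_cases h : z ∈ s
    · exact hfs z h
    · exact continuousWithinAt_of_notMem_closure (by rwa [hs.closure_eq])
  have hwt : ContinuousWithinAt f t z := by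
    by_cases h : z ∈ t
    · exact hft z h
    · exact continuousWithinAt_of_notMem_closure (by rwa [ht.closure_eq])
  exact hws.union hwt

lemma fif_cover (x : ℕ → ℝ) : ∀ m, 1 ≤ m → ∀ z ∈ Icc (x 0) (x m),
    ∃ n, 1 ≤ n ∧ n ≤ m ∧ z ∈ Icc (x (n - 1)) (x n) := by
  intro m
  induction m with
  | zero => omega
  | succ k ih =>
    intro _ z hz
    rcases Nat.eq_zero_or_pos k with rfl | hk0
    · exact ⟨1, le_refl _, le_refl _, by simpa using hz⟩
    · by_cases hzk : z ≤ x k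
      · obtain ⟨n, hn1, hnk, hmem⟩ := ih hk0 z ⟨hz.1, hzk⟩
        exact ⟨n, hn1, by omega, hmem⟩
      · exact ⟨k + 1, by omega, le_refl _, by simpa using ⟨le_of_lt (not_le.mp hzk), hz.2⟩⟩

lemma fif_agree (x : ℕ → ℝ) (N : ℕ) (α : ℕ → ℝ) (q : ℕ → ℝ → ℝ) (f : ℝ → ℝ) (y : ℕ → ℝ)
    (hmono : ∀ i j, i ≤ j → j ≤ N → x i ≤ x j)
    (hnode_lo : ∀ n, 1 ≤ n → n ≤ N → fifPiece x N α q f n (x (n - 1)) = y (n - 1))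
    (hnode_hi : ∀ n, 1 ≤ n → n ≤ N → fifPiece x N α q f n (x n) = y n) :
    ∀ m, m ≤ N → ∀ n, 1 ≤ n → n ≤ m → ∀ z ∈ Icc (x (n - 1)) (x n),
      fifT x N α q f m z = fifPiece x N α q f n z := by
  intro m
  induction m with
  | zero => omega
  | succ k ih =>
    intro hkN n hn1 hnk z hz
    rcases Nat.eq_or_lt_of_le hnk with h | h
    · subst h
      by_cases hzk : z ≤ x k
      · have hzeq : z = x k := le_antisymm hzk (by simpa using hz.1)
        subst hzeq
        simp only [fifT, if_pos (le_refl (x k))]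
        rcases Nat.eq_zero_or_pos k with rfl | hk0
        · rfl
        · rw [ih (by omega) k hk0 (le_refl _) (x k)
              ⟨hmono _ _ (by omega) (by omega), le_refl _⟩,
            hnode_hi k hk0 (by omega)]
          have hlo := hnode_lo (k + 1) (by omega) hkN
          simp only [Nat.add_sub_cancel] at hlo
          exact hlo.symm
      · simp only [fifT]
        rw [if_neg hzk]
    · have hnk' : n ≤ k := by omega
      have hzxk : z ≤ x k := le_trans hz.2 (hmono n k hnk' (by omega))
      simp only [fifT]
      rw [if_pos hzxk]
      exact ih (by omega) n hn1 hnk' z hz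

noncomputable def fifL (x : ℕ → ℝ) (N n : ℕ) (t : ℝ) : ℝ :=
  ((x n - x (n - 1)) / (x N - x 0)) * t + (x N * x (n - 1) - x 0 * x n) / (x N - x 0)

lemma fifLinv_L (x : ℕ → ℝ) (N n : ℕ) (hd : x 0 < x N) (hΔ : x (n - 1) < x n) (t : ℝ) :
    fifLinv x N n (fifL x N n t) = t := by
  have h1 : x N - x 0 ≠ 0 := by linarith
  have h2 : x n - x (n - 1) ≠ 0 := by linarith
  unfold fifLinv fifL
  field_simp
  try ring

lemma fifL_Linv (x : ℕ → ℝ) (N n : ℕ) (hd : x 0 < x N) (hΔ : x (n - 1) < x n) (z : ℝ) :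
    fifL x N n (fifLinv x N n z) = z := by
  have h1 : x N - x 0 ≠ 0 := by linarith
  have h2 : x n - x (n - 1) ≠ 0 := by linarith
  unfold fifLinv fifL
  field_simp
  ring

lemma fifL_lo (x : ℕ → ℝ) (N n : ℕ) (hd : x 0 < x N) :
    fifL x N n (x 0) = x (n - 1) := by
  have h1 : x N - x 0 ≠ 0 := by linarith
  unfold fifL
  field_simp
  ring

lemma fifL_hi (x : ℕ → ℝ) (N n : ℕ) (hd : x 0 < x N) :
    fifL x N n (x N) = x n := by
  have h1 : x N - x 0 ≠ 0 := by linarith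
  unfold fifL
  field_simp
  ring

lemma fifLinv_lo (x : ℕ → ℝ) (N n : ℕ) (hd : x 0 < x N) (hΔ : x (n - 1) < x n) :
    fifLinv x N n (x (n - 1)) = x 0 := by
  rw [← fifL_lo x N n hd, fifLinv_L x N n hd hΔ]

lemma fifLinv_hi (x : ℕ → ℝ) (N n : ℕ) (hd : x 0 < x N) (hΔ : x (n - 1) < x n) :
    fifLinv x N n (x n) = x N := by
  rw [← fifL_hi x N n hd, fifLinv_L x N n hd hΔ]

lemma fifLinv_mem (x : ℕ → ℝ) (N n : ℕ) (hd : x 0 < x N) (hΔ : x (n - 1) < x n)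
    {z : ℝ} (hz : z ∈ Icc (x (n - 1)) (x n)) : fifLinv x N n z ∈ Icc (x 0) (x N) := by
  have h2 : (0:ℝ) < x n - x (n - 1) := by linarith
  unfold fifLinv
  constructor
  · rw [le_div_iff₀ h2]
    nlinarith [hz.1, hz.2]
  · rw [div_le_iff₀ h2]
    nlinarith [hz.1, hz.2]

lemma fifL_mem (x : ℕ → ℝ) (N n : ℕ) (hd : x 0 < x N) (hΔ : x (n - 1) < x n)
    {t : ℝ} (ht : t ∈ Icc (x 0) (x N)) : fifL x N n t ∈ Icc (x (n - 1)) (x n) := by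
  have h1 : (0:ℝ) < x N - x 0 := by linarith
  have h1' : x N - x 0 ≠ 0 := ne_of_gt h1
  have key1 : fifL x N n t - x (n - 1) = ((x n - x (n - 1)) * (t - x 0)) / (x N - x 0) := by
    unfold fifL; field_simp; ring
  have key2 : x n - fifL x N n t = ((x n - x (n - 1)) * (x N - t)) / (x N - x 0) := by
    unfold fifL; field_simp; ring
  have k1 : (0:ℝ) ≤ ((x n - x (n - 1)) * (t - x 0)) / (x N - x 0) :=
    div_nonneg (mul_nonneg (by linarith) (by linarith [ht.1])) (le_of_lt h1)
  have k2 : (0:ℝ) ≤ ((x n - x (n - 1)) * (x N - t)) / (x N - x 0) :=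
    div_nonneg (mul_nonneg (by linarith) (by linarith [ht.2])) (le_of_lt h1)
  constructor
  · linarith [key1 ▸ k1]
  · linarith [key2 ▸ k2]

lemma fifLinv_continuous (x : ℕ → ℝ) (N n : ℕ) : Continuous (fifLinv x N n) := by
  unfold fifLinv
  fun_prop

open Classical in
noncomputable def fifExt (K : Set ℝ) (c : ℝ) (F : C(K, ℝ)) (z : ℝ) : ℝ :=
  if h : z ∈ K then F ⟨z, h⟩ else c

open Classical in

lemma fifExt_eq (K : Set ℝ) (c : ℝ) (F : C(K, ℝ)) {z : ℝ} (hz : z ∈ K) :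
    fifExt K c F z = F ⟨z, hz⟩ := by unfold fifExt; exact dif_pos hz

lemma fifExt_continuousOn (K : Set ℝ) (c : ℝ) (F : C(K, ℝ)) :
    ContinuousOn (fifExt K c F) K := by
  rw [continuousOn_iff_continuous_restrict]
  have : K.restrict (fifExt K c F) = ⇑F := by
    funext z
    show fifExt K c F z.1 = F z
    unfold fifExt
    exact dif_pos z.2
  rw [show K.domRestrict (fifExt K c F) = ⇑F from this]
  exact F.continuous

theorem fractal_interpolation_function_existsUnique
    (N : ℕ) (hN : 1 ≤ N) (x : ℕ → ℝ) (hx : ∀ n < N, x n < x (n + 1))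
    (L : ℕ → ℝ → ℝ)
    (hL : ∀ n t, L n t = ((x n - x (n - 1)) / (x N - x 0)) * t +
      (x N * x (n - 1) - x 0 * x n) / (x N - x 0))
    (α : ℕ → ℝ) (hα : ∀ n, 1 ≤ n → n ≤ N → |α n| < 1)
    (q : ℕ → ℝ → ℝ) (hq : ∀ n, 1 ≤ n → n ≤ N → ContinuousOn (q n) (Set.Icc (x 0) (x N)))
    (y : ℕ → ℝ)
    (hjoin : ∀ n, 1 ≤ n → n ≤ N →
      α n * y 0 + q n (x 0) = y (n - 1) ∧ α n * y N + q n (x N) = y n) :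
    ∃ φ : ℝ → ℝ,
      ContinuousOn φ (Set.Icc (x 0) (x N)) ∧
      (∀ n, 1 ≤ n → n ≤ N → ∀ t ∈ Set.Icc (x 0) (x N),
        φ (L n t) = α n * φ t + q n t) ∧
      (∀ n ≤ N, φ (x n) = y n) ∧
      (∀ ψ : ℝ → ℝ, ContinuousOn ψ (Set.Icc (x 0) (x N)) →
        (∀ n, 1 ≤ n → n ≤ N → ∀ t ∈ Set.Icc (x 0) (x N),
          ψ (L n t) = α n * ψ t + q n t) →
        Set.EqOn ψ φ (Set.Icc (x 0) (x N))) := by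
  classical
  -- basic order facts
  have hmono : ∀ j, j ≤ N → ∀ i, i ≤ j → x i ≤ x j := by
    intro j
    induction j with
    | zero =>
      intro _ i hi
      have : i = 0 := by omega
      subst this; exact le_refl _
    | succ k ih =>
      intro hkN i hik
      rcases Nat.eq_or_lt_of_le hik with h | h
      · exact le_of_eq (congrArg x h)
      · exact le_trans (ih (by omega) i (by omega)) (le_of_lt (hx k (by omega)))
  have hΔ : ∀ n, 1 ≤ n → n ≤ N → x (n - 1) < x n := by
    intro n h1 h2
    have := hx (n - 1) (by omega)
    rwa [Nat.sub_add_cancel h1] at this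
  have hdlt : x 0 < x N := by
    have h1 := hΔ N hN (le_refl N)
    have h2 := hmono (N - 1) (by omega) 0 (by omega)
    linarith
  have hLeq : ∀ n t, L n t = fifL x N n t := by
    intro n t; rw [hL n t]; rfl
  have hx0K : x 0 ∈ Set.Icc (x 0) (x N) := ⟨le_refl _, le_of_lt hdlt⟩
  have hxNK : x N ∈ Set.Icc (x 0) (x N) := ⟨le_of_lt hdlt, le_refl _⟩
  have hxnK : ∀ n, n ≤ N → x n ∈ Set.Icc (x 0) (x N) := by
    intro n hn
    exact ⟨hmono n hn 0 (Nat.zero_le n), hmono N (le_refl N) n hn⟩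
  have hsubK : ∀ n, 1 ≤ n → n ≤ N →
      Set.Icc (x (n - 1)) (x n) ⊆ Set.Icc (x 0) (x N) :=
    fun n h1 h2 => Set.Icc_subset_Icc (hxnK (n - 1) (by omega)).1 (hxnK n h2).2
  -- the function space
  set K : Set ℝ := Set.Icc (x 0) (x N) with hKdef
  haveI : CompactSpace K := isCompact_iff_compactSpace.mp isCompact_Icc
  set e0 : K := ⟨x 0, hx0K⟩ with he0
  set eN : K := ⟨x N, hxNK⟩ with heN
  set S : Set C(K, ℝ) := {F | F e0 = y 0 ∧ F eN = y N} with hSdef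
  have hSclosed : IsClosed S := by
    have : S = {F : C(K, ℝ) | F e0 = y 0} ∩ {F : C(K, ℝ) | F eN = y N} := rfl
    rw [this]
    exact (isClosed_eq (continuous_eval_const e0) continuous_const).inter
      (isClosed_eq (continuous_eval_const eN) continuous_const)
  haveI : CompleteSpace S := hSclosed.completeSpace_coe
  have hd0 : x N - x 0 ≠ 0 := by linarith
  haveI : Nonempty S := by
    refine ⟨⟨⟨fun z => y 0 + (y N - y 0) * ((z : ℝ) - x 0) / (x N - x 0), by fun_prop⟩, ?_, ?_⟩⟩
    · show y 0 + (y N - y 0) * ((x 0 : ℝ) - x 0) / (x N - x 0) = y 0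
      simp
    · show y 0 + (y N - y 0) * ((x N : ℝ) - x 0) / (x N - x 0) = y N
      field_simp
      ring
  -- endpoint values of extensions
  have hextend : ∀ F : C(K, ℝ), F ∈ S →
      fifExt K (y 0) F (x 0) = y 0 ∧ fifExt K (y 0) F (x N) = y N := by
    intro F hF
    constructor
    · rw [fifExt_eq K (y 0) F hx0K]; exact hF.1
    · rw [fifExt_eq K (y 0) F hxNK]; exact hF.2
  -- node values of pieces
  have hnode_lo : ∀ f : ℝ → ℝ, f (x 0) = y 0 → ∀ n, 1 ≤ n → n ≤ N →
      fifPiece x N α q f n (x (n - 1)) = y (n - 1) := by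
    intro f hf0 n h1 h2
    show α n * f (fifLinv x N n (x (n - 1))) + q n (fifLinv x N n (x (n - 1))) = y (n - 1)
    rw [fifLinv_lo x N n hdlt (hΔ n h1 h2), hf0]
    exact (hjoin n h1 h2).1
  have hnode_hi : ∀ f : ℝ → ℝ, f (x N) = y N → ∀ n, 1 ≤ n → n ≤ N →
      fifPiece x N α q f n (x n) = y n := by
    intro f hfN n h1 h2
    show α n * f (fifLinv x N n (x n)) + q n (fifLinv x N n (x n)) = y n
    rw [fifLinv_hi x N n hdlt (hΔ n h1 h2), hfN]
    exact (hjoin n h1 h2).2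
  -- agreement of the operator with pieces
  have hagreeS : ∀ F : C(K, ℝ), F ∈ S → ∀ n, 1 ≤ n → n ≤ N →
      ∀ z ∈ Set.Icc (x (n - 1)) (x n),
        fifT x N α q (fifExt K (y 0) F) N z = fifPiece x N α q (fifExt K (y 0) F) n z := by
    intro F hF
    exact fun n h1 h2 z hz =>
      fif_agree x N α q (fifExt K (y 0) F) y (fun i j hij hjN => hmono j hjN i hij)
        (hnode_lo _ (hextend F hF).1) (hnode_hi _ (hextend F hF).2) N (le_refl N)
        n h1 h2 z hz
  -- continuity of pieces
  have hpieceC : ∀ F : C(K, ℝ), ∀ n, 1 ≤ n → n ≤ N →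
      ContinuousOn (fifPiece x N α q (fifExt K (y 0) F) n) (Set.Icc (x (n - 1)) (x n)) := by
    intro F n h1 h2
    have hLinvC : ContinuousOn (fifLinv x N n) (Set.Icc (x (n - 1)) (x n)) :=
      (fifLinv_continuous x N n).continuousOn
    have hmaps : Set.MapsTo (fifLinv x N n) (Set.Icc (x (n - 1)) (x n)) K :=
      fun z hz => fifLinv_mem x N n hdlt (hΔ n h1 h2) hz
    exact (continuousOn_const.mul ((fifExt_continuousOn K (y 0) F).comp hLinvC hmaps)).add
      ((hq n h1 h2).comp hLinvC hmaps)
  -- continuity of the operator image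
  have hTFcont : ∀ F : C(K, ℝ), F ∈ S →
      ContinuousOn (fifT x N α q (fifExt K (y 0) F) N) K := by
    intro F hF
    have key : ∀ m, 1 ≤ m → m ≤ N →
        ContinuousOn (fifT x N α q (fifExt K (y 0) F) N) (Set.Icc (x 0) (x m)) := by
      intro m
      induction m with
      | zero => omega
      | succ k ih =>
        intro _ hkN
        have hstep : ContinuousOn (fifT x N α q (fifExt K (y 0) F) N)
            (Set.Icc (x k) (x (k + 1))) := by
          have heq : ∀ z ∈ Set.Icc (x k) (x (k + 1)),
              fifT x N α q (fifExt K (y 0) F) N z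
                = fifPiece x N α q (fifExt K (y 0) F) (k + 1) z := by
            intro z hz
            have := hagreeS F hF (k + 1) (by omega) hkN z (by simpa using hz)
            simpa using this
          have := hpieceC F (k + 1) (by omega) hkN
          simp only [Nat.add_sub_cancel] at this
          exact this.congr heq
        rcases Nat.eq_zero_or_pos k with rfl | hk0
        · simpa using hstep
        · have hun : Set.Icc (x 0) (x k) ∪ Set.Icc (x k) (x (k + 1))
              = Set.Icc (x 0) (x (k + 1)) :=
            Set.Icc_union_Icc_eq_Icc (hmono k (by omega) 0 (Nat.zero_le k))
              (le_of_lt (hx k (by omega)))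
          rw [← hun]
          exact fif_pasting isClosed_Icc isClosed_Icc (ih hk0 (by omega)) hstep
    exact key N hN (le_refl N)
  -- the operator as a self-map of S
  have hTSend : ∀ F : C(K, ℝ), F ∈ S →
      fifT x N α q (fifExt K (y 0) F) N (x 0) = y 0 ∧
      fifT x N α q (fifExt K (y 0) F) N (x N) = y N := by
    intro F hF
    constructor
    · have h1 := hagreeS F hF 1 (le_refl 1) hN (x 0)
        (by simp only [Nat.sub_self]; exact ⟨le_refl _, le_of_lt (hΔ 1 (le_refl 1) hN)⟩)
      rw [h1]
      have := hnode_lo _ (hextend F hF).1 1 (le_refl 1) hN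
      simpa using this
    · have h1 := hagreeS F hF N hN (le_refl N) (x N)
        ⟨le_of_lt (hΔ N hN (le_refl N)), le_refl _⟩
      rw [h1]
      exact hnode_hi _ (hextend F hF).2 N hN (le_refl N)
  let TS : S → S := fun F =>
    ⟨⟨fun z => fifT x N α q (fifExt K (y 0) F.1) N z.1,
      continuousOn_iff_continuous_restrict.mp (hTFcont F.1 F.2)⟩,
      (hTSend F.1 F.2).1, (hTSend F.1 F.2).2⟩
  -- the contraction constant
  have hne : (Finset.Icc 1 N).Nonempty := ⟨1, Finset.mem_Icc.mpr ⟨le_refl 1, hN⟩⟩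
  set c : ℝ := (Finset.Icc 1 N).sup' hne (fun n => |α n|) with hcdef
  have hcb : ∀ n, 1 ≤ n → n ≤ N → |α n| ≤ c := by
    intro n h1 h2
    rw [hcdef]
    exact Finset.le_sup' (fun m => |α m|) (Finset.mem_Icc.mpr ⟨h1, h2⟩)
  have hc0 : 0 ≤ c := le_trans (abs_nonneg (α 1)) (hcb 1 (le_refl 1) hN)
  have hc1 : c < 1 := by
    rw [hcdef, Finset.sup'_lt_iff hne]
    intro n hn
    exact hα n (Finset.mem_Icc.mp hn).1 (Finset.mem_Icc.mp hn).2
  set cK : NNReal := ⟨c, hc0⟩ with hcKdef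
  -- the operator is Lipschitz with constant c
  have hlip : LipschitzWith cK TS := by
    apply LipschitzWith.of_dist_le_mul
    intro F G
    rw [Subtype.dist_eq, Subtype.dist_eq]
    have hnn : (0 : ℝ) ≤ (cK : ℝ) * dist F.1 G.1 := mul_nonneg hc0 dist_nonneg
    rw [ContinuousMap.dist_le hnn]
    intro z
    obtain ⟨n, h1, h2, hmem⟩ := fif_cover x N hN z.1 z.2
    show dist (fifT x N α q (fifExt K (y 0) F.1) N z.1)
        (fifT x N α q (fifExt K (y 0) G.1) N z.1) ≤ (cK : ℝ) * dist F.1 G.1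
    rw [hagreeS F.1 F.2 n h1 h2 z.1 hmem, hagreeS G.1 G.2 n h1 h2 z.1 hmem]
    have hw : fifLinv x N n z.1 ∈ K := fifLinv_mem x N n hdlt (hΔ n h1 h2) hmem
    show dist (α n * fifExt K (y 0) F.1 (fifLinv x N n z.1) + q n (fifLinv x N n z.1))
        (α n * fifExt K (y 0) G.1 (fifLinv x N n z.1) + q n (fifLinv x N n z.1))
        ≤ (cK : ℝ) * dist F.1 G.1
    rw [fifExt_eq K (y 0) F.1 hw, fifExt_eq K (y 0) G.1 hw]
    have heq : dist (α n * F.1 ⟨fifLinv x N n z.1, hw⟩ + q n (fifLinv x N n z.1))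
        (α n * G.1 ⟨fifLinv x N n z.1, hw⟩ + q n (fifLinv x N n z.1))
        = |α n| * dist (F.1 ⟨fifLinv x N n z.1, hw⟩) (G.1 ⟨fifLinv x N n z.1, hw⟩) := by
      rw [Real.dist_eq, Real.dist_eq, ← abs_mul]
      ring_nf
    rw [heq]
    have : (cK : ℝ) = c := rfl
    rw [this]
    exact mul_le_mul (hcb n h1 h2) (ContinuousMap.dist_apply_le_dist _) dist_nonneg hc0
  have hcontr : ContractingWith cK TS := by
    refine ⟨?_, hlip⟩
    rw [← NNReal.coe_lt_coe]
    exact hc1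
  -- the fixed point
  set Φ : S := ContractingWith.fixedPoint TS hcontr with hΦdef
  have hfix : TS Φ = Φ := hcontr.fixedPoint_isFixedPt
  have hfixpt : ∀ z, ∀ hz : z ∈ K,
      fifExt K (y 0) Φ.1 z = fifT x N α q (fifExt K (y 0) Φ.1) N z := by
    intro z hz
    rw [fifExt_eq K (y 0) Φ.1 hz]
    conv_lhs => rw [← hfix]
    rfl
  refine ⟨fifExt K (y 0) Φ.1, fifExt_continuousOn K (y 0) Φ.1, ?_, ?_, ?_⟩
  · -- functional equation
    intro n h1 h2 t ht
    rw [hLeq n t]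
    have hmem : fifL x N n t ∈ Set.Icc (x (n - 1)) (x n) :=
      fifL_mem x N n hdlt (hΔ n h1 h2) ht
    have hzK : fifL x N n t ∈ K := hsubK n h1 h2 hmem
    rw [hfixpt _ hzK, hagreeS Φ.1 Φ.2 n h1 h2 _ hmem]
    show α n * fifExt K (y 0) Φ.1 (fifLinv x N n (fifL x N n t))
        + q n (fifLinv x N n (fifL x N n t)) = _
    rw [fifLinv_L x N n hdlt (hΔ n h1 h2) t]
  · -- interpolation values
    intro n hn
    rcases Nat.eq_zero_or_pos n with rfl | h1
    · rw [fifExt_eq K (y 0) Φ.1 hx0K]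
      exact Φ.2.1
    · rw [hfixpt _ (hxnK n hn),
        hagreeS Φ.1 Φ.2 n h1 hn (x n) ⟨le_of_lt (hΔ n h1 hn), le_refl _⟩]
      exact hnode_hi _ (hextend Φ.1 Φ.2).2 n h1 hn
  · -- uniqueness
    intro ψ hψc hψfe
    have hψ0 : ψ (x 0) = y 0 := by
      have hfe := hψfe 1 (le_refl 1) hN (x 0) hx0K
      rw [hLeq 1 (x 0), fifL_lo x N 1 hdlt] at hfe
      simp only [Nat.sub_self] at hfe
      have hy := (hjoin 1 (le_refl 1) hN).1
      simp only [Nat.sub_self] at hy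
      have hα1 := abs_lt.mp (hα 1 (le_refl 1) hN)
      have h2 : (1 - α 1) * (ψ (x 0) - y 0) = 0 := by linear_combination hfe + hy
      rcases mul_eq_zero.mp h2 with h | h
      · exfalso; linarith [hα1.2]
      · linarith
    have hψN : ψ (x N) = y N := by
      have hfe := hψfe N hN (le_refl N) (x N) hxNK
      rw [hLeq N (x N), fifL_hi x N N hdlt] at hfe
      have hy := (hjoin N hN (le_refl N)).2
      have hαN := abs_lt.mp (hα N hN (le_refl N))
      have h2 : (1 - α N) * (ψ (x N) - y N) = 0 := by linear_combination hfe + hy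
      rcases mul_eq_zero.mp h2 with h | h
      · exfalso; linarith [hαN.2]
      · linarith
    set Ψ : C(K, ℝ) := ⟨K.restrict ψ, continuousOn_iff_continuous_restrict.mp hψc⟩
      with hΨdef
    have hΨS : Ψ ∈ S := ⟨hψ0, hψN⟩
    have hfixΨ : TS ⟨Ψ, hΨS⟩ = ⟨Ψ, hΨS⟩ := by
      apply Subtype.ext
      apply ContinuousMap.ext
      intro z
      show fifT x N α q (fifExt K (y 0) Ψ) N z.1 = ψ z.1
      obtain ⟨n, h1, h2, hmem⟩ := fif_cover x N hN z.1 z.2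
      rw [hagreeS Ψ hΨS n h1 h2 z.1 hmem]
      have hw : fifLinv x N n z.1 ∈ K := fifLinv_mem x N n hdlt (hΔ n h1 h2) hmem
      have hfe := hψfe n h1 h2 (fifLinv x N n z.1) hw
      rw [hLeq, fifL_Linv x N n hdlt (hΔ n h1 h2)] at hfe
      show α n * fifExt K (y 0) Ψ (fifLinv x N n z.1) + q n (fifLinv x N n z.1) = ψ z.1
      rw [fifExt_eq K (y 0) Ψ hw]
      exact hfe.symm
    have hΦeq : (⟨Ψ, hΨS⟩ : S) = Φ := hcontr.fixedPoint_unique hfixΨ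
    intro z hz
    calc ψ z = Ψ ⟨z, hz⟩ := rfl
      _ = Φ.1 ⟨z, hz⟩ := by rw [← hΦeq]
      _ = fifExt K (y 0) Φ.1 z := (fifExt_eq K (y 0) Φ.1 hz).symm
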